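/- Let p₁, p₂ be orthogonal projections and q₁, q₂ be orthogonal projections in M_n(ℂ) with [p₁,q₁] − [p₂,q₂] = 0. Then for every λ ∈ ℂ with |λ| = 1, the matrix U(λ) = I + (λ−1)p₁q₁ + (λ̄−1)p₂q₂ is unitary. -/

import Mathlib

open Matrix

private lemma keyid {n : ℕ} (x₁ x₂ y₁ y₂ : Matrix (Fin n) (Fin n) ℂ)
    (hx₁ : x₁ * x₁ = x₁) (hx₂ : x₂ * x₂ = x₂) (hx' : x₂ * x₁ = 0)
    (hE : x₁ * y₁ - y₁ * x₁ = x₂ * y₂ - y₂ * x₂) :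
    x₁ * y₁ * x₁ + x₂ * y₂ * x₂ = y₁ * x₁ + x₂ * y₂ := by
  have h1 : x₁ * y₁ * x₁ - y₁ * x₁ = x₂ * y₂ * x₁ := by
    have h := congrArg (· * x₁) hE
    simp only [sub_mul] at h
    rw [mul_assoc y₁ x₁ x₁, hx₁, mul_assoc y₂ x₂ x₁, hx', mul_zero, sub_zero] at h
    exact h
  have h2 : -(x₂ * (y₁ * x₁)) = x₂ * y₂ - x₂ * y₂ * x₂ := by
    have h := congrArg (x₂ * ·) hE
    simp only [mul_sub] at h
    rw [← mul_assoc x₂ x₁ y₁, hx', zero_mul, zero_sub, ← mul_assoc x₂ x₂ y₂, hx₂,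
      ← mul_assoc x₂ y₂ x₂] at h
    exact h
  have h3 : -(x₂ * (y₁ * x₁)) = x₂ * y₂ * x₁ := by
    have h := congrArg (x₂ * ·) h1
    simp only [mul_sub] at h
    rw [← mul_assoc x₂ (x₁ * y₁) x₁, ← mul_assoc x₂ x₁ y₁, hx', zero_mul,
      zero_mul, zero_sub, ← mul_assoc x₂ (x₂ * y₂) x₁, ← mul_assoc x₂ x₂ y₂, hx₂] at h
    exact h
  have h4 : x₂ * y₂ * x₁ = x₂ * y₂ - x₂ * y₂ * x₂ := by rw [← h3, h2]
  have h5 : x₁ * y₁ * x₁ = y₁ * x₁ + (x₂ * y₂ - x₂ * y₂ * x₂) := by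
    rw [← h4, ← h1]; abel
  rw [h5]; abel

private lemma aux_expand {n : ℕ} (a b c d X Y : Matrix (Fin n) (Fin n) ℂ) (μ ν : ℂ)
    (hac : a * c = X) (had : a * d = 0) (hbc : b * c = 0) (hbd : b * d = Y)
    (hXY : X + Y = c + b) (hacd : a - c = b - d) (hμν : μ * ν = -μ - ν) :
    (1 + μ • a + ν • b) * (1 + ν • c + μ • d) = 1 := by
  have expand : (1 + μ • a + ν • b) * (1 + ν • c + μ • d)
      = 1 + ν • c + μ • d + μ • a + (μ * ν) • X + ν • b + (μ * ν) • Y := by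
    simp only [add_mul, mul_add, one_mul, mul_one, smul_mul_assoc, mul_smul_comm,
      smul_smul, hac, had, hbc, hbd, smul_zero, add_zero, mul_comm ν μ]
    module
  rw [expand]
  have hA : a = c + (b - d) := by rw [← hacd]; abel
  have hXY' : (μ * ν) • X + (μ * ν) • Y = (μ * ν) • (c + b) := by
    rw [← smul_add, hXY]
  have : 1 + ν • c + μ • d + μ • a + (μ * ν) • X + ν • b + (μ * ν) • Y
      = 1 + ν • c + μ • d + μ • a + ν • b + ((μ * ν) • X + (μ * ν) • Y) := by abel
  rw [this, hXY', hμν, hA]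
  module

/-- If `p₁, p₂` are orthogonal projections, `q₁, q₂` are orthogonal projections in `Mₙ(ℂ)`,
`[p₁,q₁] - [p₂,q₂] = 0`, and `|λ| = 1`, then
`U(λ) = I + (λ-1)p₁q₁ + (conj λ - 1)p₂q₂` is unitary. -/
theorem deformation_unitary {n : ℕ} (p₁ p₂ q₁ q₂ : Matrix (Fin n) (Fin n) ℂ)
    (hp₁ : p₁ * p₁ = p₁) (hp₁s : p₁ᴴ = p₁) (hp₂ : p₂ * p₂ = p₂) (hp₂s : p₂ᴴ = p₂)
    (hp : p₁ * p₂ = 0) (hp' : p₂ * p₁ = 0)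
    (hq₁ : q₁ * q₁ = q₁) (hq₁s : q₁ᴴ = q₁) (hq₂ : q₂ * q₂ = q₂) (hq₂s : q₂ᴴ = q₂)
    (hq : q₁ * q₂ = 0) (hq' : q₂ * q₁ = 0)
    (hcomm : (p₁ * q₁ - q₁ * p₁) - (p₂ * q₂ - q₂ * p₂) = 0)
    (lam : ℂ) (hlam : ‖lam‖ = 1) :
    (1 + (lam - 1) • (p₁ * q₁) + ((starRingEnd ℂ) lam - 1) • (p₂ * q₂)) *
        (1 + (lam - 1) • (p₁ * q₁) + ((starRingEnd ℂ) lam - 1) • (p₂ * q₂))ᴴ = 1 ∧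
      (1 + (lam - 1) • (p₁ * q₁) + ((starRingEnd ℂ) lam - 1) • (p₂ * q₂))ᴴ *
        (1 + (lam - 1) • (p₁ * q₁) + ((starRingEnd ℂ) lam - 1) • (p₂ * q₂)) = 1 := by
  set μ : ℂ := lam - 1 with hμ
  set ν : ℂ := (starRingEnd ℂ) lam - 1 with hν
  have hE : p₁ * q₁ - q₁ * p₁ = p₂ * q₂ - q₂ * p₂ := by
    rw [sub_eq_zero] at hcomm; exact hcomm
  have hE' : q₁ * p₁ - p₁ * q₁ = q₂ * p₂ - p₂ * q₂ := by
    rw [← neg_sub, hE, neg_sub]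
  have hmod : lam * (starRingEnd ℂ) lam = 1 := by
    rw [Complex.mul_conj, ← Complex.sq_norm, hlam]; norm_num
  have hμν : μ * ν = -μ - ν := by
    rw [hμ, hν]; linear_combination hmod
  have hνμ : ν * μ = -ν - μ := by rw [mul_comm, hμν]; ring
  -- adjoint computation
  have hadj : (1 + μ • (p₁ * q₁) + ν • (p₂ * q₂))ᴴ
      = 1 + ν • (q₁ * p₁) + μ • (q₂ * p₂) := by
    simp only [conjTranspose_add, conjTranspose_smul, conjTranspose_mul,
      conjTranspose_one, hp₁s, hp₂s, hq₁s, hq₂s, hμ, hν, Complex.star_def, map_sub, _root_.map_one,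
      Complex.conj_conj, RingHom.id_apply]
  -- key identities
  have key1 : p₁ * q₁ * p₁ + p₂ * q₂ * p₂ = q₁ * p₁ + p₂ * q₂ :=
    keyid p₁ p₂ q₁ q₂ hp₁ hp₂ hp' hE
  have key2 : q₁ * p₁ * q₁ + q₂ * p₂ * q₂ = p₁ * q₁ + q₂ * p₂ :=
    keyid q₁ q₂ p₁ p₂ hq₁ hq₂ hq' hE'
  constructor
  · rw [hadj]
    refine aux_expand (p₁ * q₁) (p₂ * q₂) (q₁ * p₁) (q₂ * p₂)
      (p₁ * q₁ * p₁) (p₂ * q₂ * p₂) μ ν ?_ ?_ ?_ ?_ key1 ?_ hμν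
    · rw [mul_assoc, ← mul_assoc q₁ q₁ p₁, hq₁, ← mul_assoc]
    · rw [mul_assoc, ← mul_assoc q₁ q₂ p₂, hq, zero_mul, mul_zero]
    · rw [mul_assoc, ← mul_assoc q₂ q₁ p₁, hq', zero_mul, mul_zero]
    · rw [mul_assoc, ← mul_assoc q₂ q₂ p₂, hq₂, ← mul_assoc]
    · exact hE
  · rw [hadj]
    refine aux_expand (q₁ * p₁) (q₂ * p₂) (p₁ * q₁) (p₂ * q₂)
      (q₁ * p₁ * q₁) (q₂ * p₂ * q₂) ν μ ?_ ?_ ?_ ?_ key2 ?_ hνμ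
    · rw [mul_assoc, ← mul_assoc p₁ p₁ q₁, hp₁, ← mul_assoc]
    · rw [mul_assoc, ← mul_assoc p₁ p₂ q₂, hp, zero_mul, mul_zero]
    · rw [mul_assoc, ← mul_assoc p₂ p₁ q₁, hp', zero_mul, mul_zero]
    · rw [mul_assoc, ← mul_assoc p₂ p₂ q₂, hp₂, ← mul_assoc]
    · exact hE'
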